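/- Let X and Y be abelian Polish groups. If A ⊆ X is Haar meager in X and B ⊆ Y is contained in some Borel subset B₀ of Y, then the product set A × B is Haar meager in the product group X × Y. -/

import Mathlib

open MeasureTheory Set

/-- A set in a topological abelian group is *Haar meager* if there is a Borel set `B ⊇ A`,
a nonempty compact metric space `K` and a continuous `f : K → G` such that `f ⁻¹' (B + x)`
is meager in `K` for every `x ∈ G`. -/
def IsHaarMeager {G : Type*} [TopologicalSpace G] [AddCommGroup G] (A : Set G) : Prop :=
  ∃ B : Set G, A ⊆ B ∧ MeasurableSet[borel G] B ∧
    ∃ (K : Type) (_ : MetricSpace K) (_ : CompactSpace K) (_ : Nonempty K) (f : K → G),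
      Continuous f ∧ ∀ x : G, IsMeagre (f ⁻¹' ((fun b => b + x) '' B))

/-- A set in a topological abelian group is *Haar null* if there is a Borel probability
measure `μ` and a Borel set `B ⊇ A` with `μ (x + B) = 0` for every `x ∈ G`. -/
def IsHaarNull {G : Type*} [TopologicalSpace G] [AddCommGroup G] (A : Set G) : Prop :=
  ∃ μ : @Measure G (borel G), @IsProbabilityMeasure G (borel G) μ ∧
    ∃ B : Set G, A ⊆ B ∧ MeasurableSet[borel G] B ∧
      ∀ x : G, μ ((fun b => x + b) '' B) = 0

/-- If `A ⊆ X` is Haar meager and `B ⊆ Y` is contained in a Borel set `B₀`, then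
`A × B` is Haar meager in `X × Y`. -/
theorem haarMeager_prod {X Y : Type*}
    [TopologicalSpace X] [AddCommGroup X] [IsTopologicalAddGroup X] [PolishSpace X]
    [TopologicalSpace Y] [AddCommGroup Y] [IsTopologicalAddGroup Y] [PolishSpace Y]
    (A : Set X) (B B₀ : Set Y) (hA : IsHaarMeager A) (hBB₀ : B ⊆ B₀)
    (hB₀ : MeasurableSet[borel Y] B₀) :
    IsHaarMeager (A ×ˢ B) := by
  obtain ⟨BA, hABA, hBAmeas, K, _, _, _, f, hf, hmeager⟩ := hA
  refine ⟨BA ×ˢ B₀, Set.prod_mono hABA hBB₀, ?_, K, ‹_›, ‹_›, ‹_›,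
    fun k => (f k, 0), hf.prodMk continuous_const, ?_⟩
  · letI : MeasurableSpace X := borel X
    haveI : BorelSpace X := ⟨rfl⟩
    letI : MeasurableSpace Y := borel Y
    haveI : BorelSpace Y := ⟨rfl⟩
    haveI : BorelSpace (X × Y) := Prod.borelSpace
    rw [← ‹BorelSpace (X × Y)›.measurable_eq]
    exact hBAmeas.prod hB₀
  · rintro ⟨x, y⟩
    refine (hmeager x).mono ?_
    rintro k ⟨⟨a, b⟩, ⟨ha, hb⟩, h⟩
    exact ⟨a, ha, (Prod.ext_iff.mp h).1⟩
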